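/- arXiv:math/0602496 — 3 statements merged into one kernel-verified Lean document; each statement's English description precedes it below -/
import Mathlib

section
/- Let g(x)=e^{-x²/2}/√(2π) and G(x)=∫_{-∞}^x g(u)du, with inverse G⁻¹:(0,1)→R. Then g(G⁻¹(y)) ~ y·√(−2 log y) as y→0⁺, and g(G⁻¹(y)) ~ (1−y)·√(−2 log(1−y)) as y→1⁻. -/
open MeasureTheory Real Set Filter
open scoped Topology

noncomputable section

/-- The standard Gaussian density `g(x) = e^{-x²/2}/√(2π)`. -/
def gaussPDF (x : ℝ) : ℝ := Real.exp (-x^2/2) / Real.sqrt (2*Real.pi)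

/-- The standard Gaussian cumulative distribution function `G(x) = ∫_{-∞}^x g`. -/
def gaussCDF (x : ℝ) : ℝ := ∫ u in Set.Iic x, gaussPDF u

/-- The inverse `G⁻¹ : (0,1) → ℝ` of the standard Gaussian CDF (`G` is a strictly
increasing continuous bijection from `ℝ` onto `(0,1)`). -/
def gaussCDFInv (y : ℝ) : ℝ := sSup {x | gaussCDF x ≤ y}

lemma gaussPDF_pos (x : ℝ) : 0 < gaussPDF x :=
  div_pos (Real.exp_pos _) (Real.sqrt_pos.2 (by positivity))

lemma gaussPDF_eq (x : ℝ) : gaussPDF x = Real.exp (-(1/2) * x^2) / Real.sqrt (2*Real.pi) := by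
  rw [gaussPDF]; ring_nf

lemma continuous_gaussPDF : Continuous gaussPDF := by
  unfold gaussPDF
  exact (Real.continuous_exp.comp (by continuity)).div_const _

lemma integrable_gaussPDF : Integrable gaussPDF := by
  have : Integrable (fun x : ℝ => Real.exp (-(1/2) * x^2)) := integrable_exp_neg_mul_sq (by norm_num)
  simpa only [← gaussPDF_eq] using this.div_const (Real.sqrt (2*Real.pi))

lemma integral_gaussPDF : ∫ x, gaussPDF x = 1 := by
  have h := integral_gaussian (1/2 : ℝ)
  simp only [gaussPDF_eq]
  rw [integral_div, h]
  rw [div_eq_one_iff_eq (by positivity)]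
  norm_num
  ring

lemma gaussPDF_even (x : ℝ) : gaussPDF (-x) = gaussPDF x := by
  simp [gaussPDF, neg_pow]


lemma gaussCDF_sub (a b : ℝ) : gaussCDF b - gaussCDF a = ∫ u in a..b, gaussPDF u :=
  intervalIntegral.integral_Iic_sub_Iic integrable_gaussPDF.integrableOn integrable_gaussPDF.integrableOn

lemma strictMono_gaussCDF : StrictMono gaussCDF := by
  intro a b hab
  have h := gaussCDF_sub a b
  have hpos : 0 < ∫ u in a..b, gaussPDF u :=
    intervalIntegral.intervalIntegral_pos_of_pos
      (continuous_gaussPDF.intervalIntegrable a b) (fun x => gaussPDF_pos x) hab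
  linarith

lemma continuous_gaussCDF : Continuous gaussCDF := by
  have : ∀ x : ℝ, HasDerivAt gaussCDF (gaussPDF x) x := by
    intro x
    have : gaussCDF = fun y => gaussCDF 0 + ∫ u in (0:ℝ)..y, gaussPDF u := by
      funext y; rw [← gaussCDF_sub]; ring
    rw [this]
    exact (intervalIntegral.integral_hasDerivAt_right
      (continuous_gaussPDF.intervalIntegrable 0 x)
      (continuous_gaussPDF.stronglyMeasurableAtFilter _ _)
      continuous_gaussPDF.continuousAt).const_add _
  exact continuous_iff_continuousAt.2 fun x => (this x).continuousAt

lemma tendsto_gaussCDF_atBot : Tendsto gaussCDF atBot (𝓝 0) := by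
  have h := intervalIntegral_tendsto_integral_Iic (0:ℝ)
    (integrable_gaussPDF.integrableOn) tendsto_id
  have : Tendsto (fun x : ℝ => gaussCDF 0 - ∫ u in x..(0:ℝ), gaussPDF u) atBot
      (𝓝 (gaussCDF 0 - gaussCDF 0)) := by
    exact (tendsto_const_nhds.sub h)
  simpa only [sub_self, ← gaussCDF_sub, sub_sub_cancel] using this

lemma tendsto_gaussCDF_atTop : Tendsto gaussCDF atTop (𝓝 1) := by
  have h := intervalIntegral_tendsto_integral_Ioi (0:ℝ)
    (integrable_gaussPDF.integrableOn) tendsto_id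
  have heq : gaussCDF 0 + ∫ u in Ioi (0:ℝ), gaussPDF u = 1 := by
    rw [gaussCDF, intervalIntegral.integral_Iic_add_Ioi integrable_gaussPDF.integrableOn
      integrable_gaussPDF.integrableOn, integral_gaussPDF]
  have : Tendsto (fun x : ℝ => gaussCDF 0 + ∫ u in (0:ℝ)..x, gaussPDF u) atTop
      (𝓝 (gaussCDF 0 + ∫ u in Ioi (0:ℝ), gaussPDF u)) := tendsto_const_nhds.add h
  rw [heq] at this
  refine this.congr fun x => ?_
  rw [← gaussCDF_sub]; ring

lemma gaussCDF_pos (x : ℝ) : 0 < gaussCDF x := by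
  rw [gaussCDF]
  rw [setIntegral_pos_iff_support_of_nonneg_ae
    (Eventually.of_forall fun u => (gaussPDF_pos u).le) integrable_gaussPDF.integrableOn]
  have : (Function.support gaussPDF) = univ := by
    ext u; simp [Function.mem_support, (gaussPDF_pos u).ne']
  rw [this, Set.univ_inter]
  simp [Real.volume_Iic]


lemma gaussCDF_add_Ioi (x : ℝ) : gaussCDF x + ∫ u in Ioi x, gaussPDF u = 1 := by
  rw [gaussCDF, intervalIntegral.integral_Iic_add_Ioi integrable_gaussPDF.integrableOn
    integrable_gaussPDF.integrableOn, integral_gaussPDF]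

lemma gaussCDF_lt_one (x : ℝ) : gaussCDF x < 1 := by
  have h := gaussCDF_add_Ioi x
  have hpos : 0 < ∫ u in Ioi x, gaussPDF u := by
    rw [setIntegral_pos_iff_support_of_nonneg_ae
      (Eventually.of_forall fun u => (gaussPDF_pos u).le) integrable_gaussPDF.integrableOn]
    have : (Function.support gaussPDF) = univ := by
      ext u; simp [Function.mem_support, (gaussPDF_pos u).ne']
    rw [this, Set.univ_inter]
    simp [Real.volume_Ioi]
  linarith

lemma gaussCDF_neg (x : ℝ) : gaussCDF (-x) = 1 - gaussCDF x := by
  have h1 : gaussCDF (-x) = ∫ u in Ioi x, gaussPDF u := by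
    rw [gaussCDF, ← integral_comp_neg_Ioi]
    exact setIntegral_congr_fun measurableSet_Ioi fun u _ => gaussPDF_even u
  have := gaussCDF_add_Ioi x
  linarith

lemma gaussCDF_surjOn : ∀ y ∈ Ioo (0:ℝ) 1, ∃ x, gaussCDF x = y := by
  intro y hy
  obtain ⟨a, ha⟩ := (tendsto_gaussCDF_atBot.eventually_lt_const hy.1).exists
  obtain ⟨b, hb⟩ := (tendsto_gaussCDF_atTop.eventually_const_lt hy.2).exists
  exact intermediate_value_univ (f := gaussCDF) a b continuous_gaussCDF ⟨ha.le, hb.le⟩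


lemma gaussCDFInv_gaussCDF (x : ℝ) : gaussCDFInv (gaussCDF x) = x := by
  have : {z | gaussCDF z ≤ gaussCDF x} = Iic x := by
    ext z; simp [strictMono_gaussCDF.le_iff_le]
  rw [gaussCDFInv, this, csSup_Iic]

lemma gaussCDF_gaussCDFInv {y : ℝ} (hy : y ∈ Ioo (0:ℝ) 1) :
    gaussCDF (gaussCDFInv y) = y := by
  obtain ⟨x, hx⟩ := gaussCDF_surjOn y hy
  rw [← hx, gaussCDFInv_gaussCDF]

lemma tendsto_gaussCDFInv_atBot : Tendsto gaussCDFInv (𝓝[>] (0:ℝ)) atBot := by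
  rw [tendsto_atBot]
  intro K
  filter_upwards [Ioo_mem_nhdsGT_of_mem (by exact ⟨le_refl 0, gaussCDF_pos K⟩ :
    (0:ℝ) ∈ Ico 0 (gaussCDF K))] with y hy
  obtain ⟨x, hx⟩ := gaussCDF_surjOn y ⟨hy.1, hy.2.trans (gaussCDF_lt_one K)⟩
  rw [← hx, gaussCDFInv_gaussCDF]
  have : gaussCDF x < gaussCDF K := hx ▸ hy.2
  exact (strictMono_gaussCDF.lt_iff_lt.1 this).le

lemma hasDerivAt_gaussPDF (x : ℝ) : HasDerivAt gaussPDF (-x * gaussPDF x) x := by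
  have h : HasDerivAt (fun u : ℝ => Real.exp (-u^2/2)) (-x * Real.exp (-x^2/2)) x := by
    have h1 : HasDerivAt (fun u : ℝ => -u^2/2) (-x) x := by
      have := (hasDerivAt_pow 2 x).neg.div_const 2
      refine this.congr_deriv ?_
      norm_num
      ring
    have h2 := h1.exp
    convert h2 using 1
    ring
  have h3 := h.div_const (Real.sqrt (2*Real.pi))
  have : gaussPDF = fun u => Real.exp (-u^2/2) / Real.sqrt (2*Real.pi) := rfl
  rw [this]
  refine h3.congr_deriv ?_
  simp only [gaussPDF]
  ring

lemma tendsto_gaussPDF_atBot : Tendsto gaussPDF atBot (𝓝 0) := by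
  have h0 : Tendsto (fun x : ℝ => x^2) atBot atTop := by
    have ha : Tendsto (fun x : ℝ => |x|) atBot atTop := tendsto_abs_atBot_atTop
    have hb : Tendsto (fun x : ℝ => x^2) atTop atTop := tendsto_pow_atTop two_ne_zero
    simpa [Function.comp_def, sq_abs] using hb.comp ha
  have h1 : Tendsto (fun x : ℝ => -x^2/2) atBot atBot := by
    have hn : Tendsto (fun y : ℝ => -y) atTop atBot := tendsto_neg_atTop_atBot
    have := hn.comp (h0.atTop_div_const (by norm_num : (0:ℝ) < 2))
    simpa [Function.comp_def, neg_div] using this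
  have := Real.tendsto_exp_atBot.comp h1
  have h2 := this.mul_const (Real.sqrt (2*Real.pi))⁻¹
  rw [zero_mul] at h2
  exact h2.congr fun x => by simp [Function.comp_apply, gaussPDF, div_eq_mul_inv]

lemma integrable_mul_gaussPDF : Integrable (fun u : ℝ => -u * gaussPDF u) := by
  have h : Integrable (fun u : ℝ => u * Real.exp (-(1/2) * u^2)) := by
    simpa using integrable_mul_exp_neg_mul_sq (b := (1/2:ℝ)) (by norm_num)
  have := (h.div_const (Real.sqrt (2*Real.pi))).neg
  refine this.congr (Eventually.of_forall fun u => ?_)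
  simp only [Pi.neg_apply, gaussPDF_eq]
  ring

lemma integral_Iic_mul_gaussPDF (x : ℝ) :
    ∫ u in Iic x, -u * gaussPDF u = gaussPDF x := by
  have := integral_Iic_of_hasDerivAt_of_tendsto' (a := x) (f := gaussPDF)
    (f' := fun u => -u * gaussPDF u) (m := 0)
    (fun u _ => hasDerivAt_gaussPDF u) integrable_mul_gaussPDF.integrableOn
    tendsto_gaussPDF_atBot
  simpa using this


lemma mills_upper {x : ℝ} (hx : x < 0) : gaussCDF x ≤ gaussPDF x / (-x) := by
  have hxpos : (0:ℝ) < -x := neg_pos.2 hx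
  have hmono : ∫ u in Iic x, gaussPDF u ≤ ∫ u in Iic x, (-u * gaussPDF u) / (-x) := by
    refine setIntegral_mono_on integrable_gaussPDF.integrableOn
      (integrable_mul_gaussPDF.div_const _).integrableOn measurableSet_Iic ?_
    intro u hu
    have hu' : (0:ℝ) < -u := by simp only [mem_Iic] at hu; linarith
    rw [le_div_iff₀ hxpos]
    have h1 : gaussPDF u * (-x) ≤ gaussPDF u * (-u) :=
      mul_le_mul_of_nonneg_left (by linarith [mem_Iic.1 hu]) (gaussPDF_pos u).le
    linarith [h1]
  calc gaussCDF x ≤ ∫ u in Iic x, (-u * gaussPDF u) / (-x) := hmono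
    _ = (∫ u in Iic x, -u * gaussPDF u) / (-x) := by rw [integral_div]
    _ = gaussPDF x / (-x) := by rw [integral_Iic_mul_gaussPDF]

lemma integrableOn_gaussPDF_aux {x : ℝ} (hx : x < 0) :
    IntegrableOn (fun u => gaussPDF u * (1 + 1/u^2)) (Iic x) := by
  have hmeas : AEStronglyMeasurable (fun u => gaussPDF u * (1 + 1/u^2))
      (volume.restrict (Iic x)) := by
    refine ContinuousOn.aestronglyMeasurable ?_ measurableSet_Iic
    refine continuous_gaussPDF.continuousOn.mul (continuousOn_const.add ?_)
    refine ContinuousOn.div continuousOn_const (continuous_pow 2).continuousOn ?_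
    intro u hu
    have : u < 0 := lt_of_le_of_lt (mem_Iic.1 hu) hx
    exact pow_ne_zero 2 this.ne
  refine Integrable.mono' ((integrable_gaussPDF.mul_const (1 + 1/x^2)).integrableOn) hmeas ?_
  filter_upwards [ae_restrict_mem measurableSet_Iic] with u hu
  have hu' : u < 0 := lt_of_le_of_lt (mem_Iic.1 hu) hx
  have hux : x^2 ≤ u^2 := by nlinarith [mem_Iic.1 hu]
  have h1 : 1/u^2 ≤ 1/x^2 := by
    apply one_div_le_one_div_of_le (by nlinarith) hux
  have h2 : (0:ℝ) < 1 + 1/u^2 := by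
    have : (0:ℝ) < u^2 := by nlinarith
    positivity
  rw [Real.norm_eq_abs, abs_of_pos (mul_pos (gaussPDF_pos u) h2)]
  exact mul_le_mul_of_nonneg_left (by linarith) (gaussPDF_pos u).le

lemma integral_Iic_gaussPDF_one_add {x : ℝ} (hx : x < 0) :
    ∫ u in Iic x, gaussPDF u * (1 + 1/u^2) = gaussPDF x / (-x) := by
  have hderiv : ∀ u ∈ Iic x, HasDerivAt (fun v => -(gaussPDF v / v))
      (gaussPDF u * (1 + 1/u^2)) u := by
    intro u hu
    have hu0 : u ≠ 0 := (lt_of_le_of_lt (mem_Iic.1 hu) hx).ne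
    have h := ((hasDerivAt_gaussPDF u).div (hasDerivAt_id u) hu0).neg
    refine h.congr_deriv ?_
    simp only [id]
    field_simp
    ring
  have htend : Tendsto (fun v => -(gaussPDF v / v)) atBot (𝓝 0) := by
    have h1 : Tendsto (fun v : ℝ => v⁻¹) atBot (𝓝 0) := by
      have h0 := (tendsto_inv_atTop_zero (𝕜 := ℝ)).comp tendsto_neg_atBot_atTop
      have h2 := h0.neg
      rw [neg_zero] at h2
      exact h2.congr fun v => by rw [Function.comp_apply, inv_neg, neg_neg]
    have := (tendsto_gaussPDF_atBot.mul h1).neg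
    simpa [div_eq_mul_inv] using this
  have := integral_Iic_of_hasDerivAt_of_tendsto' hderiv (integrableOn_gaussPDF_aux hx) htend
  rw [this]
  rw [sub_zero, div_neg]

lemma integrableOn_gaussPDF_div_sq {x : ℝ} (hx : x < 0) :
    IntegrableOn (fun u => gaussPDF u * (1/u^2)) (Iic x) := by
  have h := (integrableOn_gaussPDF_aux hx).sub integrable_gaussPDF.integrableOn
  refine MeasureTheory.IntegrableOn.congr_fun h (fun u _ => ?_) measurableSet_Iic
  simp only [Pi.sub_apply]
  ring

lemma mills_lower {x : ℝ} (hx : x < 0) : gaussPDF x * (-x) / (x^2+1) ≤ gaussCDF x := by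
  have hxpos : (0:ℝ) < -x := neg_pos.2 hx
  have hx2 : (0:ℝ) < x^2 := by nlinarith
  have hsplit : ∫ u in Iic x, gaussPDF u * (1 + 1/u^2)
      = gaussCDF x + ∫ u in Iic x, gaussPDF u * (1/u^2) := by
    rw [gaussCDF, ← integral_add integrable_gaussPDF.integrableOn
      (integrableOn_gaussPDF_div_sq hx)]
    refine setIntegral_congr_fun measurableSet_Iic fun u _ => ?_
    ring
  have hbound : ∫ u in Iic x, gaussPDF u * (1/u^2) ≤ (1/x^2) * gaussCDF x := by
    have : ∫ u in Iic x, gaussPDF u * (1/u^2) ≤ ∫ u in Iic x, gaussPDF u * (1/x^2) := by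
      refine setIntegral_mono_on (integrableOn_gaussPDF_div_sq hx)
        (integrable_gaussPDF.mul_const _).integrableOn measurableSet_Iic fun u hu => ?_
      have hu' : u < 0 := lt_of_le_of_lt (mem_Iic.1 hu) hx
      have hux : x^2 ≤ u^2 := by nlinarith [mem_Iic.1 hu]
      exact mul_le_mul_of_nonneg_left
        (one_div_le_one_div_of_le (by nlinarith) hux) (gaussPDF_pos u).le
    calc ∫ u in Iic x, gaussPDF u * (1/u^2) ≤ ∫ u in Iic x, gaussPDF u * (1/x^2) := this
      _ = (1/x^2) * gaussCDF x := by rw [integral_mul_const, gaussCDF, mul_comm]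
  have hkey : gaussPDF x / (-x) ≤ gaussCDF x * (1 + 1/x^2) := by
    rw [← integral_Iic_gaussPDF_one_add hx, hsplit]
    have : gaussCDF x * (1 + 1/x^2) = gaussCDF x + (1/x^2) * gaussCDF x := by ring
    linarith
  rw [div_le_iff₀ (by positivity : (0:ℝ) < x^2+1)]
  have h1 := mul_le_mul_of_nonneg_right hkey (sq_nonneg x)
  have hxne : x ≠ 0 := hx.ne
  have e1 : gaussPDF x / (-x) * x^2 = gaussPDF x * (-x) := by
    field_simp
  have e2 : gaussCDF x * (1 + 1/x^2) * x^2 = gaussCDF x * (x^2+1) := by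
    field_simp
  rw [e1, e2] at h1
  exact h1


lemma tendsto_sq_atBot_atTop : Tendsto (fun x : ℝ => x^2) atBot atTop := by
  have ha : Tendsto (fun x : ℝ => |x|) atBot atTop := tendsto_abs_atBot_atTop
  have hb : Tendsto (fun x : ℝ => x^2) atTop atTop := tendsto_pow_atTop two_ne_zero
  simpa [Function.comp_def, sq_abs] using hb.comp ha

lemma tendsto_const_div_sq_atBot (c : ℝ) : Tendsto (fun x : ℝ => c / x^2) atBot (𝓝 0) := by
  have h := (tendsto_inv_atTop_zero (𝕜 := ℝ)).comp tendsto_sq_atBot_atTop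
  have h2 := h.const_mul c
  rw [mul_zero] at h2
  exact h2.congr fun x => by rw [Function.comp_apply, div_eq_mul_inv]

lemma tendsto_log_div_sq_atTop : Tendsto (fun t : ℝ => Real.log t / t^2) atTop (𝓝 0) := by
  have hA : Tendsto (fun t : ℝ => Real.log t / t) atTop (𝓝 0) :=
    Real.isLittleO_log_id_atTop.tendsto_div_nhds_zero
  have hB : Tendsto (fun t : ℝ => t⁻¹) atTop (𝓝 0) := tendsto_inv_atTop_zero
  have := hA.mul hB
  rw [mul_zero] at this
  exact this.congr fun t => by rw [sq, ← div_div, div_eq_mul_inv (Real.log t / t)]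

lemma tendsto_log_neg_div_sq_atBot : Tendsto (fun x : ℝ => Real.log (-x) / x^2) atBot (𝓝 0) := by
  have := tendsto_log_div_sq_atTop.comp tendsto_neg_atBot_atTop
  exact this.congr fun x => by rw [Function.comp_apply, neg_sq]

lemma tendsto_aux_div_sq (c : ℝ) :
    Tendsto (fun x : ℝ => (x^2 + c + 2*Real.log (-x))/x^2) atBot (𝓝 1) := by
  have h := (tendsto_const_nhds (x := (1:ℝ)) (f := atBot)).add
    ((tendsto_const_div_sq_atBot c).add (tendsto_log_neg_div_sq_atBot.const_mul 2))
  norm_num at h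
  refine h.congr' ?_
  filter_upwards [eventually_lt_atBot (0:ℝ)] with x hx
  have hx2 : x^2 ≠ 0 := pow_ne_zero 2 hx.ne
  rw [Real.log_neg_eq_log]
  have hx0 : x ≠ 0 := hx.ne
  field_simp
  ring

lemma log_gaussPDF (x : ℝ) : Real.log (gaussPDF x) = -x^2/2 - Real.log (Real.sqrt (2*Real.pi)) := by
  rw [gaussPDF, Real.log_div (Real.exp_ne_zero _) (by positivity), Real.log_exp]


lemma neg_two_log_gaussCDF_lower {x : ℝ} (hx : x ≤ -1) :
    x^2 + 2*Real.log (Real.sqrt (2*Real.pi)) + 2*Real.log (-x) ≤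
      -2 * Real.log (gaussCDF x) := by
  have hx0 : x < 0 := lt_of_le_of_lt hx (by norm_num)
  have hxpos : (0:ℝ) < -x := neg_pos.2 hx0
  have h1 : Real.log (gaussCDF x) ≤ Real.log (gaussPDF x / (-x)) :=
    Real.log_le_log (gaussCDF_pos x) (mills_upper hx0)
  have h2 : Real.log (gaussPDF x / (-x)) = Real.log (gaussPDF x) - Real.log (-x) :=
    Real.log_div (gaussPDF_pos x).ne' hxpos.ne'
  rw [h2, log_gaussPDF] at h1
  linarith

lemma neg_two_log_gaussCDF_upper {x : ℝ} (hx : x ≤ -1) :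
    -2 * Real.log (gaussCDF x) ≤
      x^2 + (2*Real.log (Real.sqrt (2*Real.pi)) + 2*Real.log 2) + 2*Real.log (-x) := by
  have hx0 : x < 0 := lt_of_le_of_lt hx (by norm_num)
  have hxpos : (0:ℝ) < -x := neg_pos.2 hx0
  have hx1 : (1:ℝ) ≤ -x := by linarith
  have hnum : (0:ℝ) < gaussPDF x * (-x) / (x^2+1) :=
    div_pos (mul_pos (gaussPDF_pos x) hxpos) (by positivity)
  have h1 : Real.log (gaussPDF x * (-x) / (x^2+1)) ≤ Real.log (gaussCDF x) :=
    Real.log_le_log hnum (mills_lower hx0)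
  have h2 : Real.log (gaussPDF x * (-x) / (x^2+1)) =
      Real.log (gaussPDF x) + Real.log (-x) - Real.log (x^2+1) := by
    rw [Real.log_div (mul_pos (gaussPDF_pos x) hxpos).ne' (by positivity),
      Real.log_mul (gaussPDF_pos x).ne' hxpos.ne']
  have h3 : Real.log (x^2+1) ≤ Real.log 2 + 2*Real.log (-x) := by
    have ha : x^2 + 1 ≤ 2 * (-x)^2 := by nlinarith
    have hb : Real.log (x^2+1) ≤ Real.log (2 * (-x)^2) :=
      Real.log_le_log (by positivity) ha
    have hc : Real.log (2 * (-x)^2) = Real.log 2 + 2*Real.log (-x) := by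
      rw [Real.log_mul (by norm_num) (by positivity), Real.log_pow]
      push_cast; ring
    linarith
  rw [h2, log_gaussPDF] at h1
  linarith

lemma tendsto_neg_two_log_gaussCDF_div_sq :
    Tendsto (fun x : ℝ => (-2 * Real.log (gaussCDF x)) / x^2) atBot (𝓝 1) := by
  refine tendsto_of_tendsto_of_tendsto_of_le_of_le'
    (tendsto_aux_div_sq (2*Real.log (Real.sqrt (2*Real.pi))))
    (tendsto_aux_div_sq (2*Real.log (Real.sqrt (2*Real.pi)) + 2*Real.log 2)) ?_ ?_
  · filter_upwards [eventually_le_atBot (-1:ℝ)] with x hx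
    have hx2 : (0:ℝ) < x^2 := by nlinarith
    exact div_le_div_of_nonneg_right (neg_two_log_gaussCDF_lower hx) hx2.le
  · filter_upwards [eventually_le_atBot (-1:ℝ)] with x hx
    have hx2 : (0:ℝ) < x^2 := by nlinarith
    exact div_le_div_of_nonneg_right (neg_two_log_gaussCDF_upper hx) hx2.le

lemma tendsto_sqrt_neg_two_log_gaussCDF :
    Tendsto (fun x : ℝ => Real.sqrt (-2 * Real.log (gaussCDF x)) / (-x)) atBot (𝓝 1) := by
  have h := (Real.continuous_sqrt.tendsto 1).comp tendsto_neg_two_log_gaussCDF_div_sq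
  rw [Real.sqrt_one] at h
  refine h.congr' ?_
  filter_upwards [eventually_lt_atBot (0:ℝ)] with x hx
  rw [Function.comp_apply, Real.sqrt_div' _ (sq_nonneg x), Real.sqrt_sq_eq_abs, abs_of_neg hx]

lemma tendsto_gaussPDF_div_mul_neg :
    Tendsto (fun x : ℝ => gaussPDF x / (gaussCDF x * (-x))) atBot (𝓝 1) := by
  have hupper : Tendsto (fun x : ℝ => (x^2+1)/x^2) atBot (𝓝 1) := by
    have h := (tendsto_const_nhds (x := (1:ℝ)) (f := atBot)).add (tendsto_const_div_sq_atBot 1)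
    norm_num at h
    refine h.congr' ?_
    filter_upwards [eventually_lt_atBot (0:ℝ)] with x hx
    have hx2 : x^2 ≠ 0 := pow_ne_zero 2 hx.ne
    rw [add_div, div_self hx2, one_div]
  refine tendsto_of_tendsto_of_tendsto_of_le_of_le' tendsto_const_nhds hupper ?_ ?_
  · filter_upwards [eventually_lt_atBot (0:ℝ)] with x hx
    have hxpos : (0:ℝ) < -x := neg_pos.2 hx
    have hG : 0 < gaussCDF x := gaussCDF_pos x
    rw [le_div_iff₀ (mul_pos hG hxpos), one_mul]
    have := mills_upper hx
    rw [le_div_iff₀ hxpos] at this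
    linarith
  · filter_upwards [eventually_lt_atBot (0:ℝ)] with x hx
    have hxpos : (0:ℝ) < -x := neg_pos.2 hx
    have hG : 0 < gaussCDF x := gaussCDF_pos x
    have hx2 : (0:ℝ) < x^2 := by nlinarith
    rw [div_le_div_iff₀ (mul_pos hG hxpos) hx2]
    have := mills_lower hx
    rw [div_le_iff₀ (by positivity : (0:ℝ) < x^2+1)] at this
    nlinarith [gaussPDF_pos x]

lemma tendsto_gauss_ratio_atBot :
    Tendsto (fun x : ℝ => gaussPDF x /
      (gaussCDF x * Real.sqrt (-2 * Real.log (gaussCDF x)))) atBot (𝓝 1) := by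
  have h := tendsto_gaussPDF_div_mul_neg.div tendsto_sqrt_neg_two_log_gaussCDF one_ne_zero
  rw [div_one] at h
  refine h.congr' ?_
  filter_upwards [eventually_lt_atBot (0:ℝ)] with x hx
  have hxpos : (0:ℝ) < -x := neg_pos.2 hx
  have hG : 0 < gaussCDF x := gaussCDF_pos x
  have hlogneg : Real.log (gaussCDF x) < 0 := Real.log_neg hG (gaussCDF_lt_one x)
  have hsqrt : 0 < Real.sqrt (-2 * Real.log (gaussCDF x)) :=
    Real.sqrt_pos.2 (by linarith)
  rw [Pi.div_apply]
  field_simp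
  ring_nf
  rw [mul_assoc (gaussPDF x) x x⁻¹, mul_inv_cancel₀ hx.ne, mul_one]


lemma gaussCDFInv_one_sub {y : ℝ} (hy : y ∈ Ioo (0:ℝ) 1) :
    gaussCDFInv (1 - y) = -gaussCDFInv y := by
  have h : gaussCDF (-(gaussCDFInv y)) = 1 - y := by
    rw [gaussCDF_neg, gaussCDF_gaussCDFInv hy]
  rw [← h, gaussCDFInv_gaussCDF]

lemma part1 : Tendsto (fun y => gaussPDF (gaussCDFInv y) / (y * Real.sqrt (-2 * Real.log y)))
    (𝓝[>] (0:ℝ)) (𝓝 1) := by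
  have h := tendsto_gauss_ratio_atBot.comp tendsto_gaussCDFInv_atBot
  refine h.congr' ?_
  filter_upwards [Ioo_mem_nhdsGT_of_mem (⟨le_refl 0, one_pos⟩ : (0:ℝ) ∈ Ico 0 1)] with y hy
  rw [Function.comp_apply, gaussCDF_gaussCDFInv hy]


/-- **Lemma 4.2 of Benaïm–Rossignol (second part).**
`g(G⁻¹(y)) ~ y·√(-2 log y)` as `y → 0⁺` and
`g(G⁻¹(y)) ~ (1-y)·√(-2 log(1-y))` as `y → 1⁻`. -/
theorem gaussPDF_gaussCDFInv_asymptotics :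
    Tendsto (fun y => gaussPDF (gaussCDFInv y) / (y * Real.sqrt (-2 * Real.log y)))
      (nhdsWithin 0 (Set.Ioi 0)) (nhds 1) ∧
    Tendsto (fun y => gaussPDF (gaussCDFInv y) /
        ((1 - y) * Real.sqrt (-2 * Real.log (1 - y))))
      (nhdsWithin 1 (Set.Iio 1)) (nhds 1) := by
  refine ⟨part1, ?_⟩
  have hmap : Tendsto (fun y : ℝ => 1 - y) (𝓝[<] (1:ℝ)) (𝓝[>] (0:ℝ)) := by
    apply tendsto_nhdsWithin_of_tendsto_nhds_of_eventually_within
    · have : Tendsto (fun y : ℝ => 1 - y) (𝓝 1) (𝓝 0) := by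
        have hc : Continuous (fun y : ℝ => 1 - y) := continuous_const.sub continuous_id
        simpa using hc.tendsto (1:ℝ)
      exact this.mono_left nhdsWithin_le_nhds
    · filter_upwards [self_mem_nhdsWithin] with y hy
      simpa using hy
  have h := part1.comp hmap
  refine h.congr' ?_
  filter_upwards [Ioo_mem_nhdsLT_of_mem (⟨zero_lt_one, le_refl 1⟩ : (1:ℝ) ∈ Ioc 0 1)]
    with y hy
  have hy' : y ∈ Ioo (0:ℝ) 1 := ⟨hy.1, hy.2⟩
  rw [Function.comp_apply, gaussCDFInv_one_sub hy', gaussPDF_even]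

end
end

section
/- There exists a constant c>0 such that for every positive integer m there exists a function g_m : {0,1}^{m²} → {0,…,m} with the two properties: (1) for every coordinate q ∈ {1,…,m²}, the discrete gradient satisfies |∇_q g_m| ∈ {0, 1/2} everywhere (equivalently, flipping any single coordinate changes the value of g_m by at most 1); and (2) max_{y∈{0,…,m}} λ({x : g_m(x)=y}) ≤ c/m, where λ is the uniform measure on {0,1}^{m²}. -/
open Finset

lemma cb_bound (k : ℕ) : (2*k+1) * Nat.centralBinom k ^ 2 ≤ 16 ^ k := by
  induction k with
  | zero => simp [Nat.centralBinom]
  | succ k ih =>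
    have h := Nat.succ_mul_centralBinom_succ k
    have key : (k+1)^2 * ((2*(k+1)+1) * Nat.centralBinom (k+1) ^ 2)
        ≤ (k+1)^2 * 16 ^ (k+1) := by
      have e : (k+1)^2 * ((2*(k+1)+1) * Nat.centralBinom (k+1) ^ 2)
          = (2*k+3) * ((k+1) * Nat.centralBinom (k+1))^2 := by ring
      rw [e, h]
      calc (2*k+3) * (2 * (2*k+1) * Nat.centralBinom k)^2
          = (4*(2*k+1)*(2*k+3)) * ((2*k+1) * Nat.centralBinom k ^2) := by ring
        _ ≤ (4*(2*k+1)*(2*k+3)) * 16^k := Nat.mul_le_mul_left _ ih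
        _ ≤ ((k+1)^2 * 16) * 16^k := by nlinarith
        _ = (k+1)^2 * 16^(k+1) := by ring
    exact Nat.le_of_mul_le_mul_left key (by positivity)

lemma middle_sq (n : ℕ) : (Nat.choose n (n/2))^2 * n ≤ (2^n)^2 := by
  rcases Nat.even_or_odd n with ⟨k, hk⟩ | ⟨k, hk⟩
  · subst hk
    have h2 : (k+k)/2 = k := by omega
    have hc : (k+k).choose ((k+k)/2) = Nat.centralBinom k := by
      rw [h2, Nat.centralBinom]; congr 1; omega
    rw [hc]
    have e : ((2:ℕ)^(k+k))^2 = 16^k := by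
      rw [← pow_mul, show (16:ℕ) = 2^4 by norm_num, ← pow_mul]; congr 1; ring
    rw [e]
    calc Nat.centralBinom k^2 * (k+k) ≤ (2*k+1) * Nat.centralBinom k ^2 := by
          rw [mul_comm]; apply Nat.mul_le_mul_right; omega
      _ ≤ 16^k := cb_bound k
  · subst hk
    have h2 : (2*k+1)/2 = k := by omega
    have hd : 2 * (2*k+1).choose k = Nat.centralBinom (k+1) := by
      rw [Nat.centralBinom, show 2*(k+1) = (2*k+1)+1 by ring, Nat.choose_succ_succ]
      have hsymm : (2*k+1).choose (k+1) = (2*k+1).choose k := by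
        rw [← Nat.choose_symm (by omega : k+1 ≤ 2*k+1)]; congr 1; omega
      simp only [Nat.succ_eq_add_one] at *
      omega
    rw [h2]
    have e1 : 4 * ((2*k+1).choose k ^2 * (2*k+1)) = (2*k+1) * Nat.centralBinom (k+1)^2 := by
      rw [← hd]; ring
    have e2 : 4 * (((2:ℕ)^(2*k+1))^2) = 16^(k+1) := by
      rw [← pow_mul, show (16:ℕ) = 2^4 by norm_num, ← pow_mul,
        show (4:ℕ) = 2^2 by norm_num, ← pow_add]
      congr 1; ring
    have : 4 * ((2*k+1).choose k ^2 * (2*k+1)) ≤ 4 * (((2:ℕ)^(2*k+1))^2) := by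
      rw [e1, e2]
      calc (2*k+1) * Nat.centralBinom (k+1)^2 ≤ (2*(k+1)+1) * Nat.centralBinom (k+1)^2 := by
            apply Nat.mul_le_mul_right; omega
        _ ≤ 16^(k+1) := cb_bound (k+1)
    omega

lemma middle_bound (m : ℕ) : Nat.choose (m^2) (m^2/2) * m ≤ 2 ^ (m^2) := by
  have key : (Nat.choose (m^2) (m^2/2) * m)^2 ≤ (2^(m^2))^2 := by
    calc (Nat.choose (m^2) (m^2/2) * m)^2
        = (Nat.choose (m^2) (m^2/2))^2 * (m^2) := by ring
      _ ≤ (2^(m^2))^2 := middle_sq (m^2)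
  exact (Nat.pow_le_pow_iff_left (by norm_num)).mp key


lemma mono_choose {n a b : ℕ} (hab : a ≤ b) (hb : b ≤ (n+1)/2) :
    n.choose a ≤ n.choose b := by
  induction b with
  | zero =>
    have : a = 0 := by omega
    simp [this]
  | succ b ih =>
    rcases Nat.lt_or_ge a (b+1) with h | h
    · have ha : a ≤ b := by omega
      rcases Nat.lt_or_ge b (n/2) with hb2 | hb2
      · exact (ih ha (by omega)).trans (Nat.choose_le_succ_of_lt_half_left hb2)
      · have heq : n.choose (b+1) = n.choose b := by
          rw [← Nat.choose_symm (by omega : b+1 ≤ n)]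
          congr 1; omega
        rw [heq]; exact ih ha (by omega)
    · have : a = b+1 := by omega
      simp [this]

lemma anti_choose {n a b : ℕ} (ha : n/2 ≤ a) (hab : a ≤ b) (hb : b ≤ n) :
    n.choose b ≤ n.choose a := by
  rw [← Nat.choose_symm hb, ← Nat.choose_symm (hab.trans hb)]
  exact mono_choose (by omega) (by omega)

lemma mod_spacing {d j1 j2 : ℕ} (h : j1 % d = j2 % d) (hlt : j1 < j2) : j1 + d ≤ j2 := by
  have hdvd : d ∣ j2 - j1 := (Nat.modEq_iff_dvd' hlt.le).mp h
  have := Nat.le_of_dvd (by omega) hdvd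
  omega

lemma class_sum (n d r : ℕ) (hd : 0 < d) :
    d * ∑ j ∈ (range (n+1)).filter (fun j => j % d = r), n.choose j
      ≤ 2 ^ n + 2 ^ n + d * (2 * Nat.choose n (n/2)) := by
  classical
  set C := (range (n+1)).filter (fun j => j % d = r) with hC
  set L := C.filter (fun j => j + d ≤ n/2) with hLdef
  set C2 := C.filter (fun j => ¬ (j + d ≤ n/2)) with hC2def
  set R := C2.filter (fun j => n/2 + d ≤ j) with hRdef
  set M := C2.filter (fun j => ¬ (n/2 + d ≤ j)) with hMdef
  have hsplit : ∑ j ∈ C, n.choose j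
      = ∑ j ∈ L, n.choose j + (∑ j ∈ R, n.choose j + ∑ j ∈ M, n.choose j) := by
    rw [← Finset.sum_filter_add_sum_filter_not C (fun j => j + d ≤ n/2) (fun j => n.choose j),
        ← Finset.sum_filter_add_sum_filter_not C2 (fun j => n/2 + d ≤ j) (fun j => n.choose j)]
  have memL : ∀ j ∈ L, j % d = r ∧ j + d ≤ n/2 := by
    intro j hj
    simp only [hLdef, hC, Finset.mem_filter, Finset.mem_range] at hj
    exact ⟨hj.1.2, hj.2⟩
  have memR : ∀ j ∈ R, j % d = r ∧ n/2 + d ≤ j ∧ j ≤ n := by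
    intro j hj
    simp only [hRdef, hC2def, hC, Finset.mem_filter, Finset.mem_range] at hj
    obtain ⟨⟨⟨hr1, hr2⟩, hr3⟩, hr4⟩ := hj
    exact ⟨hr2, hr4, by omega⟩
  have hLb : d * ∑ j ∈ L, n.choose j ≤ 2^n := by
    have hinj : ∀ p ∈ L ×ˢ range d, ∀ q ∈ L ×ˢ range d,
        p.1 + p.2 = q.1 + q.2 → p = q := by
      rintro ⟨j, i⟩ hp ⟨j', i'⟩ hq h
      simp only [Finset.mem_product, Finset.mem_range] at hp hq
      have h1 := memL _ hp.1
      have h2 := memL _ hq.1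
      have hmod : j % d = j' % d := by rw [h1.1, h2.1]
      rcases lt_trichotomy j j' with hlt | heq | hgt
      · have := mod_spacing hmod hlt; simp only [] at h; omega
      · subst heq; simp only [] at h; simp [Prod.ext_iff]; omega
      · have := mod_spacing hmod.symm hgt; simp only [] at h; omega
    calc d * ∑ j ∈ L, n.choose j
        = ∑ j ∈ L, ∑ _i ∈ range d, n.choose j := by
          simp [Finset.sum_const, Finset.mul_sum, mul_comm]
      _ ≤ ∑ j ∈ L, ∑ i ∈ range d, n.choose (j + i) := by
          refine Finset.sum_le_sum fun j hj => Finset.sum_le_sum fun i hi => ?_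
          have h1 := memL _ hj
          have h2 := Finset.mem_range.mp hi
          exact mono_choose (Nat.le_add_right _ _) (by omega)
      _ = ∑ p ∈ L ×ˢ range d, n.choose (p.1 + p.2) := by rw [Finset.sum_product]
      _ = ∑ k ∈ (L ×ˢ range d).image (fun p => p.1 + p.2), n.choose k :=
          (Finset.sum_image hinj).symm
      _ ≤ ∑ k ∈ range (n+1), n.choose k := by
          refine Finset.sum_le_sum_of_subset ?_
          intro k hk
          simp only [Finset.mem_image, Finset.mem_product, Finset.mem_range] at hk ⊢
          obtain ⟨⟨j, i⟩, ⟨hj, hi⟩, hk⟩ := hk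
          have := memL _ hj
          omega
      _ = 2^n := Nat.sum_range_choose n
  have hRb : d * ∑ j ∈ R, n.choose j ≤ 2^n := by
    have hinj : ∀ p ∈ R ×ˢ range d, ∀ q ∈ R ×ˢ range d,
        p.1 - p.2 = q.1 - q.2 → p = q := by
      rintro ⟨j, i⟩ hp ⟨j', i'⟩ hq h
      simp only [Finset.mem_product, Finset.mem_range] at hp hq
      have h1 := memR _ hp.1
      have h2 := memR _ hq.1
      have hmod : j % d = j' % d := by rw [h1.1, h2.1]
      rcases lt_trichotomy j j' with hlt | heq | hgt
      · have := mod_spacing hmod hlt; simp only [] at h; omega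
      · subst heq; simp only [] at h; simp [Prod.ext_iff]; omega
      · have := mod_spacing hmod.symm hgt; simp only [] at h; omega
    calc d * ∑ j ∈ R, n.choose j
        = ∑ j ∈ R, ∑ _i ∈ range d, n.choose j := by
          simp [Finset.sum_const, Finset.mul_sum, mul_comm]
      _ ≤ ∑ j ∈ R, ∑ i ∈ range d, n.choose (j - i) := by
          refine Finset.sum_le_sum fun j hj => Finset.sum_le_sum fun i hi => ?_
          have h1 := memR _ hj
          have h2 := Finset.mem_range.mp hi
          exact anti_choose (by omega) (by omega) h1.2.2
      _ = ∑ p ∈ R ×ˢ range d, n.choose (p.1 - p.2) := by rw [Finset.sum_product]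
      _ = ∑ k ∈ (R ×ˢ range d).image (fun p => p.1 - p.2), n.choose k :=
          (Finset.sum_image hinj).symm
      _ ≤ ∑ k ∈ range (n+1), n.choose k := by
          refine Finset.sum_le_sum_of_subset ?_
          intro k hk
          simp only [Finset.mem_image, Finset.mem_product, Finset.mem_range] at hk ⊢
          obtain ⟨⟨j, i⟩, ⟨hj, hi⟩, hk⟩ := hk
          have := memR _ hj
          omega
      _ = 2^n := Nat.sum_range_choose n
  have hMcard : M.card ≤ 2 := by
    by_contra hcon
    push_neg at hcon
    obtain ⟨a, b, c, ha, hb, hc, hab, hac, hbc⟩ := Finset.two_lt_card_iff.mp hcon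
    have memM : ∀ j ∈ M, j % d = r ∧ n/2 < j + d ∧ j < n/2 + d := by
      intro j hj
      simp only [hMdef, hC2def, hC, Finset.mem_filter, Finset.mem_range] at hj
      obtain ⟨⟨⟨hr1, hr2⟩, hr3⟩, hr4⟩ := hj
      exact ⟨hr2, by omega, by omega⟩
    have h1 := memM _ ha
    have h2 := memM _ hb
    have h3 := memM _ hc
    have sp : ∀ u v : ℕ, u % d = r → v % d = r → u ≠ v → u + d ≤ v ∨ v + d ≤ u := by
      intro u v hu hv huv
      rcases lt_or_gt_of_ne huv with h | h
      · exact Or.inl (mod_spacing (hu.trans hv.symm) h)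
      · exact Or.inr (mod_spacing (hv.trans hu.symm) h)
    have s1 := sp a b h1.1 h2.1 hab
    have s2 := sp a c h1.1 h3.1 hac
    have s3 := sp b c h2.1 h3.1 hbc
    omega
  have hMb : ∑ j ∈ M, n.choose j ≤ 2 * Nat.choose n (n/2) := by
    calc ∑ j ∈ M, n.choose j ≤ ∑ _j ∈ M, Nat.choose n (n/2) :=
          Finset.sum_le_sum fun j _ => Nat.choose_le_middle j n
      _ = M.card * Nat.choose n (n/2) := by simp [Finset.sum_const, mul_comm]
      _ ≤ 2 * Nat.choose n (n/2) := Nat.mul_le_mul_right _ hMcard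
  calc d * ∑ j ∈ C, n.choose j
      = d * ∑ j ∈ L, n.choose j + (d * ∑ j ∈ R, n.choose j + d * ∑ j ∈ M, n.choose j) := by
        rw [hsplit]; ring
    _ ≤ 2^n + (2^n + d * (2 * Nat.choose n (n/2))) :=
        Nat.add_le_add hLb (Nat.add_le_add hRb (Nat.mul_le_mul_left _ hMb))
    _ = 2^n + 2^n + d * (2 * Nat.choose n (n/2)) := by ring


lemma count_level (n j : ℕ) :
    ((univ : Finset (Fin n → Bool)).filter
      (fun x => (univ.filter (fun i => x i = true)).card = j)).card = n.choose j := by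
  classical
  have h1 : (Finset.powersetCard j (univ : Finset (Fin n))).card = n.choose j := by
    rw [Finset.card_powersetCard, Finset.card_univ, Fintype.card_fin]
  rw [← h1]
  apply Finset.card_bij (fun x _ => univ.filter (fun i => x i = true))
  · intro x hx
    rw [Finset.mem_powersetCard]
    exact ⟨Finset.subset_univ _, (Finset.mem_filter.mp hx).2⟩
  · intro x hx y hy h
    funext i
    have := Finset.ext_iff.mp h i
    simp only [Finset.mem_filter, Finset.mem_univ, true_and] at this
    cases hxi : x i <;> cases hyi : y i <;> simp_all
  · intro s hs
    rw [Finset.mem_powersetCard] at hs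
    refine ⟨fun i => decide (i ∈ s), ?_, ?_⟩
    · simp only [Finset.mem_filter, Finset.mem_univ, true_and, decide_eq_true_eq]
      rw [show (univ.filter (fun i => i ∈ s)) = s by ext i; simp]
      exact hs.2
    · ext i; simp

lemma F_step {d : ℕ} (hd : 2 ≤ d) (a : ℕ) :
    min ((a+1) % d) (d - (a+1) % d) ≤ min (a % d) (d - a % d) + 1 ∧
    min (a % d) (d - a % d) ≤ min ((a+1) % d) (d - (a+1) % d) + 1 := by
  have h0 : a % d < d := Nat.mod_lt _ (by omega)
  have h1 : (a+1) % d = (a % d + 1) % d := by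
    rw [Nat.add_mod, Nat.mod_eq_of_lt (show 1 < d by omega)]
  rcases Nat.lt_or_ge (a % d + 1) d with h | h
  · rw [h1, Nat.mod_eq_of_lt h]; omega
  · have : a % d + 1 = d := by omega
    rw [h1, this, Nat.mod_self]; omega

lemma S_update {n : ℕ} (x : Fin n → Bool) (q : Fin n) :
    (univ.filter fun i => Function.update x q (!x q) i = true).card
      = (univ.filter fun i => x i = true).card + 1 ∨
    (univ.filter fun i => Function.update x q (!x q) i = true).card + 1
      = (univ.filter fun i => x i = true).card := by
  classical
  cases hxq : x q
  · left
    have he : (univ.filter fun i => Function.update x q (!x q) i = true)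
        = insert q (univ.filter fun i => x i = true) := by
      ext i
      simp only [Finset.mem_filter, Finset.mem_univ, true_and, Finset.mem_insert]
      by_cases hi : i = q
      · subst hi; simp [Function.update_self, hxq]
      · simp [Function.update_of_ne hi, hi]
    rw [hxq] at he
    rw [he, Finset.card_insert_of_notMem (by simp [hxq])]
  · right
    have he : (univ.filter fun i => Function.update x q (!x q) i = true)
        = (univ.filter fun i => x i = true).erase q := by
      ext i
      simp only [Finset.mem_filter, Finset.mem_univ, true_and, Finset.mem_erase]
      by_cases hi : i = q
      · subst hi; simp [Function.update_self, hxq]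
      · simp [Function.update_of_ne hi, hi]
    rw [hxq] at he
    rw [he, Finset.card_erase_of_mem (by simp [hxq])]
    have : q ∈ (univ.filter fun i => x i = true) := by simp [hxq]
    have hpos : 0 < (univ.filter fun i => x i = true).card := Finset.card_pos.mpr ⟨q, this⟩
    omega

/-- **Lemma 4.5 of Benaïm–Rossignol (averaging functions on the cube).**
There is a constant `c > 0` such that for every positive integer `m` there exists
`g_m : {0,1}^{m²} → {0,…,m}` such that (1) flipping any single coordinate changes the
value of `g_m` by at most `1` (i.e. the discrete gradient satisfies `|∇_q g_m| ∈ {0,1/2}`),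
and (2) every level set of `g_m` has uniform measure at most `c/m`. -/
theorem averaging_function_exists :
    ∃ c : ℝ, 0 < c ∧ ∀ m : ℕ, 0 < m →
      ∃ g : (Fin (m^2) → Bool) → ℕ,
        (∀ x, g x ≤ m) ∧
        (∀ x q, ((g (Function.update x q (!x q)) : ℤ) - g x).natAbs ≤ 1) ∧
        (∀ y : ℕ, ((Finset.univ.filter fun x : Fin (m^2) → Bool => g x = y).card : ℝ) /
            2 ^ (m^2) ≤ c / m) := by
  classical
  refine ⟨6, by norm_num, fun m hm => ?_⟩
  set n := m^2 with hn
  set d := 2*m with hd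
  have hd2 : 2 ≤ d := by omega
  set S : (Fin n → Bool) → ℕ := fun x => (univ.filter (fun i => x i = true)).card with hS
  refine ⟨fun x => min (S x % d) (d - S x % d), ?_, ?_, ?_⟩
  · intro x
    have h1 : S x % d < d := Nat.mod_lt _ (by omega)
    show min (S x % d) (d - S x % d) ≤ m
    omega
  · intro x q
    have hup := S_update x q
    show (((min (S (Function.update x q (!x q)) % d)
        (d - S (Function.update x q (!x q)) % d) : ℕ) : ℤ)
        - ((min (S x % d) (d - S x % d) : ℕ) : ℤ)).natAbs ≤ 1
    rcases hup with h | h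
    · have hstep := F_step hd2 (S x)
      have hx' : S (Function.update x q (!x q)) = S x + 1 := h
      rw [hx']
      omega
    · have hstep := F_step hd2 (S (Function.update x q (!x q)))
      have hx' : S x = S (Function.update x q (!x q)) + 1 := h.symm
      rw [hx']
      omega
  · intro y
    set A := (univ.filter fun x : Fin n → Bool => min (S x % d) (d - S x % d) = y) with hA
    set J := (range (n+1)).filter (fun j => min (j % d) (d - j % d) = y) with hJ
    have hSle : ∀ x : Fin n → Bool, S x ≤ n := by
      intro x
      calc S x ≤ (univ : Finset (Fin n)).card := Finset.card_filter_le _ _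
        _ = n := by simp
    have hcard : A.card = ∑ j ∈ J, n.choose j := by
      rw [Finset.card_eq_sum_card_fiberwise (f := S) (t := J)
        (fun x hx => by
          simp only [hJ, Finset.mem_coe, Finset.mem_filter, Finset.mem_range]
          exact ⟨by have := hSle x; omega, (Finset.mem_filter.mp (Finset.mem_coe.mp hx)).2⟩)]
      refine Finset.sum_congr rfl fun j hj => ?_
      have hjy : min (j % d) (d - j % d) = y := (Finset.mem_filter.mp hj).2
      have : A.filter (fun x => S x = j) = univ.filter (fun x => S x = j) := by
        ext x
        simp only [hA, Finset.mem_filter, Finset.mem_univ, true_and]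
        constructor
        · exact fun h => h.2
        · exact fun h => ⟨by rw [h, hjy], h⟩
      rw [this, count_level]
    have hsub : J ⊆ (range (n+1)).filter (fun j => j % d = y)
        ∪ (range (n+1)).filter (fun j => j % d = d - y) := by
      intro j hj
      simp only [hJ, Finset.mem_filter, Finset.mem_range] at hj
      have hlt : j % d < d := Nat.mod_lt _ (by omega)
      simp only [Finset.mem_union, Finset.mem_filter, Finset.mem_range]
      omega
    have hkey : d * A.card ≤ 12 * 2^n := by
      have h1 : ∑ j ∈ J, n.choose j
          ≤ ∑ j ∈ (range (n+1)).filter (fun j => j % d = y), n.choose j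
            + ∑ j ∈ (range (n+1)).filter (fun j => j % d = d - y), n.choose j := by
        calc ∑ j ∈ J, n.choose j
            ≤ ∑ j ∈ ((range (n+1)).filter (fun j => j % d = y)
                ∪ (range (n+1)).filter (fun j => j % d = d - y)), n.choose j :=
              Finset.sum_le_sum_of_subset hsub
          _ ≤ _ := by
              have := Finset.sum_union_inter (s₁ := (range (n+1)).filter (fun j => j % d = y))
                (s₂ := (range (n+1)).filter (fun j => j % d = d - y)) (f := fun j => n.choose j)
              omega
      have h2 := class_sum n d y (by omega)
      have h3 := class_sum n d (d - y) (by omega)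
      have h4 : d * (2 * Nat.choose n (n/2)) ≤ 4 * 2^n := by
        have hmb := middle_bound m
        rw [← hn] at hmb
        calc d * (2 * Nat.choose n (n/2)) = 4 * (Nat.choose n (n/2) * m) := by
              rw [hd]; ring
          _ ≤ 4 * 2^n := by omega
      calc d * A.card = d * ∑ j ∈ J, n.choose j := by rw [hcard]
        _ ≤ d * (∑ j ∈ (range (n+1)).filter (fun j => j % d = y), n.choose j
            + ∑ j ∈ (range (n+1)).filter (fun j => j % d = d - y), n.choose j) :=
              Nat.mul_le_mul_left _ h1
        _ = d * ∑ j ∈ (range (n+1)).filter (fun j => j % d = y), n.choose j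
            + d * ∑ j ∈ (range (n+1)).filter (fun j => j % d = d - y), n.choose j := by ring
        _ ≤ (2^n + 2^n + d * (2 * Nat.choose n (n/2)))
            + (2^n + 2^n + d * (2 * Nat.choose n (n/2))) := Nat.add_le_add h2 h3
        _ ≤ 12 * 2^n := by omega
    have hkey2 : 2 * (A.card * m) ≤ 12 * 2^n := by
      calc 2 * (A.card * m) = d * A.card := by rw [hd]; ring
        _ ≤ 12 * 2^n := hkey
    have hfin : A.card * m ≤ 6 * 2^n := by omega
    rw [div_le_div_iff₀ (by positivity) (by exact_mod_cast Nat.cast_pos.mpr hm)]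
    exact_mod_cast hfin
end

section
/- Let d≥2, let ν be a probability measure on R⁺ absolutely continuous with respect to Lebesgue measure, and let μ = ν^⊗E be the corresponding i.i.d. product measure on edge passage times of Z^d. Then for every vertex v ≠ 0, μ-almost surely there is exactly one geodesic from 0 to v, i.e. exactly one path γ from 0 to v achieving d_x(0,v) = Σ_{e∈γ} x_e (assuming, as holds in this setting, that at least one geodesic exists almost surely). -/
open MeasureTheory Set

noncomputable section

/-- The edges of `ℤ^d`, parametrized by their lower endpoint and direction. -/
abbrev LatticeEdge (d : ℕ) := (Fin d → ℤ) × Fin d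

/-- The `i`-th standard basis vector of `ℤ^d`. -/
def unitVec (d : ℕ) (i : Fin d) : Fin d → ℤ := fun j => if j = i then 1 else 0

/-- Nearest-neighbour adjacency in `ℤ^d`. -/
def latticeAdj {d : ℕ} (u w : Fin d → ℤ) : Prop :=
  (∃ i, w = u + unitVec d i) ∨ (∃ i, u = w + unitVec d i)

/-- The passage time of the (nearest-neighbour) step from `u` to `w`. -/
def stepTime {d : ℕ} (x : LatticeEdge d → ℝ) (u w : Fin d → ℤ) : ℝ :=
  ∑ i : Fin d, ((if w = u + unitVec d i then x (u, i) else 0) +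
    (if u = w + unitVec d i then x (w, i) else 0))

/-- `p` is a lattice path from `u` to `w`. -/
def IsLatticePath {d : ℕ} (p : List (Fin d → ℤ)) (u w : Fin d → ℤ) : Prop :=
  p.head? = some u ∧ p.getLast? = some w ∧ p.Chain' latticeAdj

/-- The passage time `Σ_{e∈α} x_e` of the path `p`. -/
def pathTime {d : ℕ} (x : LatticeEdge d → ℝ) (p : List (Fin d → ℤ)) : ℝ :=
  ((p.zip p.tail).map fun q => stepTime x q.1 q.2).sum

/-- The first passage time `d_x(u,w) = inf_{α:{u,w}} Σ_{e∈α} x_e`. -/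
def fppDist {d : ℕ} (x : LatticeEdge d → ℝ) (u w : Fin d → ℤ) : ℝ :=
  sInf {r | ∃ p, IsLatticePath p u w ∧ pathTime x p = r}

/-- `μ` is the product measure `ν^ι`: all its finite-dimensional marginals are the
corresponding finite product measures. -/
def IsProductMeasure {ι X : Type*} [MeasurableSpace X] (μ : Measure (ι → X))
    (ν : Measure X) : Prop :=
  ∀ s : Finset ι, μ.map (fun x (i : s) => x i) = Measure.pi (fun _ : s => ν)

/-! ### Auxiliary deterministic lemmas -/

namespace FppAux

variable {d : ℕ}

lemma unitVec_inj {u : Fin d → ℤ} {i j : Fin d}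
    (h : u + unitVec d i = u + unitVec d j) : i = j := by
  have h' : unitVec d i = unitVec d j := by
    have := congrArg (fun z => z - u) h
    simpa [add_sub_cancel_left] using this
  by_contra hij
  have := congrFun h' i
  simp [unitVec, hij, Ne.symm hij] at this

lemma not_both {u w : Fin d → ℤ} (h1 : ∃ i, w = u + unitVec d i)
    (h2 : ∃ j, u = w + unitVec d j) : False := by
  obtain ⟨i, hi⟩ := h1
  obtain ⟨j, hj⟩ := h2
  rw [hi] at hj
  have := congrFun hj i
  simp only [Pi.add_apply, unitVec] at this
  by_cases hij : i = j <;> simp [hij] at this <;> omega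

lemma self_ne_add_unitVec (u : Fin d → ℤ) (i : Fin d) : u ≠ u + unitVec d i := by
  intro h
  have := congrFun h i
  simp [unitVec] at this

/-- The edge used by the step from `u` to `w`. -/
def stepEdge [NeZero d] (u w : Fin d → ℤ) : LatticeEdge d :=
  if h : ∃ i, w = u + unitVec d i then (u, h.choose)
  else if h2 : ∃ i, u = w + unitVec d i then (w, h2.choose)
  else (w, ⟨0, Nat.pos_of_ne_zero (NeZero.ne d)⟩)

variable [NeZero d]

lemma stepEdge_spec {u w : Fin d → ℤ} (h : latticeAdj u w) :
    ((stepEdge u w).1 = u ∧ w = u + unitVec d (stepEdge u w).2) ∨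
    ((stepEdge u w).1 = w ∧ u = w + unitVec d (stepEdge u w).2) := by
  rcases h with h1 | h2
  · left
    rw [stepEdge, dif_pos h1]
    exact ⟨rfl, h1.choose_spec⟩
  · right
    have hn : ¬ ∃ i, w = u + unitVec d i := fun h1 => not_both h1 h2
    rw [stepEdge, dif_neg hn, dif_pos h2]
    exact ⟨rfl, h2.choose_spec⟩

lemma stepTime_eq_of_adj (x : LatticeEdge d → ℝ) {u w : Fin d → ℤ} (h : latticeAdj u w) :
    stepTime x u w = x (stepEdge u w) := by
  rcases h with h1 | h2
  · obtain ⟨j, hj⟩ := id h1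
    have key : ∀ i : Fin d, ((if w = u + unitVec d i then x (u, i) else 0) +
        (if u = w + unitVec d i then x (w, i) else 0)) = if i = h1.choose then x (u, i) else 0 := by
      intro i
      have h2 : ¬ u = w + unitVec d i := fun hc => not_both h1 ⟨i, hc⟩
      rw [if_neg h2, add_zero]
      by_cases hij : i = h1.choose
      · rw [if_pos (hij ▸ h1.choose_spec), if_pos hij]
      · rw [if_neg (fun hc => hij (unitVec_inj (hc.symm.trans h1.choose_spec))), if_neg hij]
    rw [stepTime, Finset.sum_congr rfl (fun i _ => key i),
      Finset.sum_ite_eq' Finset.univ h1.choose (fun i => x (u, i)),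
      if_pos (Finset.mem_univ _), stepEdge, dif_pos h1]
  · have hn : ¬ ∃ i, w = u + unitVec d i := fun h1 => not_both h1 h2
    have key : ∀ i : Fin d, ((if w = u + unitVec d i then x (u, i) else 0) +
        (if u = w + unitVec d i then x (w, i) else 0)) = if i = h2.choose then x (w, i) else 0 := by
      intro i
      have h1 : ¬ w = u + unitVec d i := fun hc => hn ⟨i, hc⟩
      rw [if_neg h1, zero_add]
      by_cases hij : i = h2.choose
      · rw [if_pos (hij ▸ h2.choose_spec), if_pos hij]
      · rw [if_neg (fun hc => hij (unitVec_inj (hc.symm.trans h2.choose_spec))), if_neg hij]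
    rw [stepTime, Finset.sum_congr rfl (fun i _ => key i),
      Finset.sum_ite_eq' Finset.univ h2.choose (fun i => x (w, i)),
      if_pos (Finset.mem_univ _), stepEdge, dif_neg hn, dif_pos h2]

/-- Equal step edges force equal (unordered) vertex pairs. -/
lemma stepEdge_inj {u w c c' : Fin d → ℤ} (h : latticeAdj u w) (h' : latticeAdj c c')
    (heq : stepEdge u w = stepEdge c c') : (c = u ∧ c' = w) ∨ (c = w ∧ c' = u) := by
  rcases stepEdge_spec h with ⟨e1, e2⟩ | ⟨e1, e2⟩ <;>
    rcases stepEdge_spec h' with ⟨f1, f2⟩ | ⟨f1, f2⟩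
  · left
    have hcu : c = u := by rw [← f1, ← heq]; exact e1
    refine ⟨hcu, ?_⟩
    rw [f2, ← heq, hcu]
    exact e2.symm
  · right
    have hc'u : c' = u := by rw [← f1, ← heq]; exact e1
    refine ⟨?_, hc'u⟩
    rw [f2, ← heq, hc'u]
    exact e2.symm
  · right
    have hcw : c = w := by rw [← f1, ← heq]; exact e1
    refine ⟨hcw, ?_⟩
    rw [f2, ← heq, hcw]
    exact e2.symm
  · left
    have hc'w : c' = w := by rw [← f1, ← heq]; exact e1
    refine ⟨?_, hc'w⟩
    rw [f2, ← heq, hc'w]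
    exact e2.symm

/-- The list of edges of a path. -/
def edgeList (p : List (Fin d → ℤ)) : List (LatticeEdge d) :=
  (p.zip p.tail).map fun q => stepEdge q.1 q.2

lemma adj_of_mem_zip_tail {p : List (Fin d → ℤ)} (hp : p.Chain' latticeAdj) :
    ∀ q ∈ p.zip p.tail, latticeAdj q.1 q.2 := by
  induction p with
  | nil => intro q hq; simp at hq
  | cons a p ih =>
    cases p with
    | nil => intro q hq; simp at hq
    | cons b l =>
      intro q hq
      rw [List.Chain', List.isChain_cons_cons] at hp
      simp only [List.tail_cons, List.zip_cons_cons, List.mem_cons] at hq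
      rcases hq with rfl | hq
      · exact hp.1
      · exact ih hp.2 q hq

lemma pathTime_eq_sum (x : LatticeEdge d → ℝ) {p : List (Fin d → ℤ)}
    (hp : p.Chain' latticeAdj) : pathTime x p = ((edgeList p).map x).sum := by
  rw [pathTime, edgeList, List.map_map]
  congr 1
  exact List.map_congr_left fun q hq => stepTime_eq_of_adj x (adj_of_mem_zip_tail hp q hq)

@[simp] lemma pathTime_nil (x : LatticeEdge d → ℝ) : pathTime x ([] : List (Fin d → ℤ)) = 0 := by
  simp [pathTime]

@[simp] lemma pathTime_singleton (x : LatticeEdge d → ℝ) (a : Fin d → ℤ) :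
    pathTime x [a] = 0 := by simp [pathTime]

lemma pathTime_cons₂ (x : LatticeEdge d → ℝ) (a b : Fin d → ℤ) (l : List (Fin d → ℤ)) :
    pathTime x (a :: b :: l) = stepTime x a b + pathTime x (b :: l) := by
  simp [pathTime]

lemma pathTime_split (x : LatticeEdge d → ℝ) (a : Fin d → ℤ) (t : List (Fin d → ℤ)) :
    ∀ s, pathTime x (s ++ a :: t) = pathTime x (s ++ [a]) + pathTime x (a :: t) := by
  intro s
  induction s with
  | nil => simp
  | cons b s ih =>
    cases s with
    | nil => simp [pathTime_cons₂]
    | cons c s' =>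
      have h1 : (b :: c :: s') ++ a :: t = b :: c :: (s' ++ a :: t) := by simp
      have h2 : (b :: c :: s') ++ [a] = b :: c :: (s' ++ [a]) := by simp
      rw [h1, h2, pathTime_cons₂, pathTime_cons₂]
      have := ih
      simp only [List.cons_append] at this
      rw [this]
      ring

lemma pathTime_nonneg (x : LatticeEdge d → ℝ) (hx : ∀ e, 0 < x e) {p : List (Fin d → ℤ)}
    (hp : p.Chain' latticeAdj) : 0 ≤ pathTime x p := by
  rw [pathTime_eq_sum x hp]
  apply List.sum_nonneg
  intro a ha
  simp only [List.mem_map] at ha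
  obtain ⟨e, _, rfl⟩ := ha
  exact (hx e).le

lemma pathTime_pos (x : LatticeEdge d → ℝ) (hx : ∀ e, 0 < x e) {p : List (Fin d → ℤ)}
    (hp : p.Chain' latticeAdj) (hlen : 2 ≤ p.length) : 0 < pathTime x p := by
  obtain ⟨a, b, l, rfl⟩ : ∃ a b l, p = a :: b :: l := by
    match p with
    | a :: b :: l => exact ⟨a, b, l, rfl⟩
  rw [pathTime_cons₂]
  have hadj : latticeAdj a b := (List.isChain_cons_cons.mp hp).1
  have h1 : 0 < stepTime x a b := by
    rw [stepTime_eq_of_adj x hadj]; exact hx _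
  have h2 : 0 ≤ pathTime x (b :: l) := pathTime_nonneg x hx (List.isChain_cons_cons.mp hp).2
  linarith

lemma exists_dup {α : Type*} {p : List α} (h : ¬ p.Nodup) :
    ∃ (a : α) (l1 l2 l3 : List α), p = l1 ++ a :: l2 ++ a :: l3 := by
  induction p with
  | nil => exact absurd List.nodup_nil h
  | cons b p ih =>
    rw [List.nodup_cons] at h
    push_neg at h
    by_cases hb : b ∈ p
    · obtain ⟨l2, l3, rfl⟩ := List.append_of_mem hb
      exact ⟨b, [], l2, l3, by simp⟩
    · obtain ⟨a, l1, l2, l3, rfl⟩ := ih (h hb)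
      exact ⟨a, b :: l1, l2, l3, by simp⟩

lemma bddBelow_times (x : LatticeEdge d → ℝ) (hx : ∀ e, 0 < x e) (u w : Fin d → ℤ) :
    BddBelow {r | ∃ p, IsLatticePath p u w ∧ pathTime x p = r} := by
  refine ⟨0, fun r hr => ?_⟩
  obtain ⟨p, hp, rfl⟩ := hr
  exact pathTime_nonneg x hx hp.2.2

/-- A geodesic has no repeated vertices. -/
lemma geodesic_nodup (x : LatticeEdge d → ℝ) (hx : ∀ e, 0 < x e) {p : List (Fin d → ℤ)}
    {u w : Fin d → ℤ} (hp : IsLatticePath p u w) (hgeo : pathTime x p = fppDist x u w) :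
    p.Nodup := by
  by_contra hnd
  obtain ⟨a, l1, l2, l3, rfl⟩ := exists_dup hnd
  obtain ⟨hhead, hlast, hchain⟩ := hp
  -- chain decompositions
  have hch1 : (l1 ++ a :: l2 ++ a :: l3) = l1 ++ (a :: (l2 ++ a :: l3)) := by simp
  rw [hch1] at hchain
  rw [List.Chain', List.isChain_append] at hchain
  obtain ⟨C1, C2, C3⟩ := hchain
  have hC2' : (a :: (l2 ++ a :: l3)) = (a :: l2 ++ [a]) ++ l3 := by simp
  have Cmid : List.Chain' latticeAdj (a :: l2 ++ [a]) := by
    rw [hC2', List.isChain_append] at C2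
    exact C2.1
  have Ctail : List.Chain' latticeAdj (a :: l3) := by
    have : (a :: (l2 ++ a :: l3)) = (a :: l2) ++ (a :: l3) := by simp
    rw [this, List.isChain_append] at C2
    exact C2.2.1
  -- the shortcut path
  set p' : List (Fin d → ℤ) := l1 ++ a :: l3 with hp'def
  have hpath' : IsLatticePath p' u w := by
    refine ⟨?_, ?_, ?_⟩
    · rw [← hhead, hp'def, hch1]
      cases l1 with
      | nil => simp
      | cons c l => simp
    · rw [← hlast, hp'def]
      rw [show (l1 ++ a :: l2 ++ a :: l3 : List _) = (l1 ++ a :: l2) ++ (a :: l3) by simp]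
      rw [List.getLast?_append_of_ne_nil _ (by simp : (a :: l3 : List _) ≠ [])]
      rw [List.getLast?_append_of_ne_nil _ (by simp : (a :: l3 : List _) ≠ [])]
    · rw [hp'def, List.Chain', List.isChain_append]
      refine ⟨C1, Ctail, ?_⟩
      intro y hy z hz
      apply C3 y hy
      simp only [List.head?_cons, Option.mem_def, Option.some.injEq] at hz ⊢
      exact hz
  -- time comparison
  have ht1 : pathTime x (l1 ++ a :: l2 ++ a :: l3)
      = pathTime x (l1 ++ [a]) + pathTime x (a :: (l2 ++ a :: l3)) := by
    rw [hch1, pathTime_split]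
  have ht2 : pathTime x (a :: (l2 ++ a :: l3))
      = pathTime x (a :: l2 ++ [a]) + pathTime x (a :: l3) := by
    have : (a :: (l2 ++ a :: l3)) = (a :: l2) ++ a :: l3 := by simp
    rw [this, pathTime_split]
  have ht3 : pathTime x p' = pathTime x (l1 ++ [a]) + pathTime x (a :: l3) := by
    rw [hp'def, pathTime_split]
  have hmidpos : 0 < pathTime x (a :: l2 ++ [a]) := by
    apply pathTime_pos x hx Cmid
    simp
  have hlt : pathTime x p' < pathTime x (l1 ++ a :: l2 ++ a :: l3) := by
    rw [ht1, ht2, ht3]; linarith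
  have hle : fppDist x u w ≤ pathTime x p' :=
    csInf_le (bddBelow_times x hx u w) ⟨p', hpath', rfl⟩
  rw [hgeo] at hlt
  linarith

/-- A self-avoiding lattice path is determined by its starting point and edge multiset. -/
lemma eq_of_edgeMultiset : ∀ (n : ℕ) (p q : List (Fin d → ℤ)) (u : Fin d → ℤ),
    p.length ≤ n → p.Chain' latticeAdj → q.Chain' latticeAdj → p.Nodup → q.Nodup →
    p.head? = some u → q.head? = some u →
    (edgeList p : Multiset (LatticeEdge d)) = (edgeList q : Multiset (LatticeEdge d)) →
    p = q := by
  intro n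
  induction n with
  | zero =>
    intro p q u hlen _ _ _ _ hph _ _
    interval_cases hp : p.length
    · rw [List.length_eq_zero_iff] at hp; subst hp; simp at hph
  | succ n ih =>
    intro p q u hlen hcp hcq hnp hnq hph hqh hm
    obtain ⟨p', rfl⟩ : ∃ p', p = u :: p' := by
      cases p with
      | nil => simp at hph
      | cons a p' => simp only [List.head?_cons, Option.some.injEq] at hph; exact ⟨p', by rw [hph]⟩
    obtain ⟨q', rfl⟩ : ∃ q', q = u :: q' := by
      cases q with
      | nil => simp at hqh
      | cons a q' => simp only [List.head?_cons, Option.some.injEq] at hqh; exact ⟨q', by rw [hqh]⟩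
    cases p' with
    | nil =>
      have hpe : edgeList ([u] : List (Fin d → ℤ)) = [] := by simp [edgeList]
      rw [hpe] at hm
      cases q' with
      | nil => rfl
      | cons b q'' =>
        exfalso
        have : edgeList (u :: b :: q'') = stepEdge u b :: edgeList (b :: q'') := by
          simp [edgeList]
        rw [this] at hm
        rw [← Multiset.cons_coe] at hm
        exact Multiset.cons_ne_zero hm.symm
    | cons a p'' =>
      have hpe : edgeList (u :: a :: p'') = stepEdge u a :: edgeList (a :: p'') := by
        simp [edgeList]
      cases q' with
      | nil =>
        exfalso
        have hqe : edgeList ([u] : List (Fin d → ℤ)) = [] := by simp [edgeList]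
        rw [hpe, hqe] at hm
        simp at hm
      | cons b q'' =>
        have hqe : edgeList (u :: b :: q'') = stepEdge u b :: edgeList (b :: q'') := by
          simp [edgeList]
        rw [hpe, hqe] at hm
        have hadjua : latticeAdj u a := (List.isChain_cons_cons.mp hcp).1
        have hadjub : latticeAdj u b := (List.isChain_cons_cons.mp hcq).1
        -- first edges coincide
        have hfirst : stepEdge u a = stepEdge u b := by
          by_contra hne
          have hmem : stepEdge u a ∈ (stepEdge u b :: edgeList (b :: q'') : List (LatticeEdge d)) := by
            have hmm : stepEdge u a ∈
                ((stepEdge u b :: edgeList (b :: q'') : List _) : Multiset (LatticeEdge d)) := by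
              rw [← hm]
              simp
            exact Multiset.mem_coe.mp hmm
          rw [List.mem_cons] at hmem
          rcases hmem with heq | hmem
          · exact hne heq
          · -- an edge of the tail of q touches u : impossible since q is self-avoiding
            rw [edgeList, List.mem_map] at hmem
            obtain ⟨r, hr, hre⟩ := hmem
            have hradj : latticeAdj r.1 r.2 :=
              adj_of_mem_zip_tail (List.isChain_cons_cons.mp hcq).2 r hr
            have hmem1 : r.1 ∈ b :: q'' ∧ r.2 ∈ b :: q'' := by
              constructor
              · exact (List.of_mem_zip hr).1
              · exact List.mem_of_mem_tail ((List.of_mem_zip hr).2)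
            have hu : u ∈ b :: q'' := by
              rcases stepEdge_inj hadjua hradj hre.symm with ⟨h1, _⟩ | ⟨_, h2⟩
              · rw [← h1]; exact hmem1.1
              · rw [← h2]; exact hmem1.2
            exact (List.nodup_cons.mp hnq).1 hu
        have hau : a ≠ u := by
          intro hh
          exact (List.nodup_cons.mp hnp).1 (hh ▸ List.mem_cons_self)
        have hab : a = b := by
          rcases stepEdge_inj hadjub hadjua hfirst.symm with ⟨_, h2⟩ | ⟨_, h2⟩
          · exact h2
          · exact absurd h2 hau
        subst hab
        have htail : (edgeList (a :: p'') : Multiset (LatticeEdge d))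
            = (edgeList (a :: q'') : Multiset (LatticeEdge d)) := by
          have hcc : (stepEdge u a ::ₘ (edgeList (a :: p'') : Multiset (LatticeEdge d)))
              = stepEdge u a ::ₘ (edgeList (a :: q'') : Multiset (LatticeEdge d)) := by
            rw [Multiset.cons_coe, Multiset.cons_coe]
            exact hm
          exact (Multiset.cons_inj_right _).mp hcc
        have := ih (a :: p'') (a :: q'') a (by simpa using Nat.le_of_succ_le_succ hlen)
          (List.isChain_cons_cons.mp hcp).2 (List.isChain_cons_cons.mp hcq).2
          (List.nodup_cons.mp hnp).2 (List.nodup_cons.mp hnq).2 rfl rfl htail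
        rw [this]

end FppAux

/-! ### Measure-theoretic lemmas -/

namespace FppAux

lemma pi_linear_null {ι : Type*} [Fintype ι] (ν : Measure ℝ) [IsProbabilityMeasure ν]
    [NullSingletonClass ν] (c : ι → ℝ) (i₀ : ι) (hc : c i₀ ≠ 0) :
    Measure.pi (fun _ : ι => ν) {y | ∑ i, c i * y i = 0} = 0 := by
  classical
  set p : ι → Prop := fun i => i ≠ i₀ with hp
  have hA : MeasurableSet {y : ι → ℝ | ∑ i, c i * y i = 0} := by
    have hmeas : Measurable fun y : ι → ℝ => ∑ i, c i * y i :=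
      Finset.measurable_sum _ fun i _ => (measurable_pi_apply i).const_mul _
    exact hmeas (measurableSet_singleton 0)
  have hmp := measurePreserving_piEquivPiSubtypeProd (fun _ : ι => ν) p
  set e := MeasurableEquiv.piEquivPiSubtypeProd (fun _ : ι => ℝ) p with he
  set B := e.symm ⁻¹' {y : ι → ℝ | ∑ i, c i * y i = 0} with hB
  have hBmeas : MeasurableSet B := e.symm.measurable hA
  have h1 : Measure.pi (fun _ : ι => ν) {y | ∑ i, c i * y i = 0}
      = ((Measure.pi fun _ : {i // p i} => ν).prod (Measure.pi fun _ : {i // ¬ p i} => ν)) B := by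
    rw [← hmp.measure_preimage hBmeas.nullMeasurableSet]
    congr 1
    rw [hB]
    ext y
    simp
  rw [h1, Measure.prod_apply hBmeas]
  have hz : ∀ y : {i // p i} → ℝ,
      (Measure.pi fun _ : {i // ¬ p i} => ν) (Prod.mk y ⁻¹' B) = 0 := by
    intro y
    have hpi₀ : ¬ p i₀ := by simp [hp]
    set j₀ : {i // ¬ p i} := ⟨i₀, hpi₀⟩ with hj₀
    set r : ℝ := ∑ i ∈ Finset.univ.erase i₀, c i * (if h : p i then y ⟨i, h⟩ else 0) with hr
    have hfib : Prod.mk y ⁻¹' B = {z : {i // ¬ p i} → ℝ | z j₀ = (-r) / c i₀} := by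
      ext z
      simp only [hB, mem_preimage, mem_setOf_eq]
      rw [← Finset.add_sum_erase Finset.univ _ (Finset.mem_univ i₀)]
      have hterm : (e.symm (y, z)) i₀ = z j₀ := by
        simp [he, MeasurableEquiv.piEquivPiSubtypeProd_symm_apply, hpi₀, hj₀]
      have hrest : ∑ i ∈ Finset.univ.erase i₀, c i * (e.symm (y, z)) i = r := by
        rw [hr]
        refine Finset.sum_congr rfl fun i hi => ?_
        have hpi : p i := (Finset.mem_erase.mp hi).1
        simp only [he, MeasurableEquiv.piEquivPiSubtypeProd_symm_apply, mul_dite, mul_zero]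
        rw [dif_pos hpi, dif_pos hpi]
      rw [hterm, hrest, eq_div_iff hc]
      constructor
      · intro h
        linear_combination h
      · intro h
        linear_combination h
    rw [hfib]
    exact Measure.pi_hyperplane _ j₀ _
  rw [lintegral_congr hz, lintegral_zero]

lemma product_linear_null {d : ℕ} (ν : Measure ℝ) [IsProbabilityMeasure ν] [NullSingletonClass ν]
    (μ : Measure (LatticeEdge d → ℝ)) [IsProbabilityMeasure μ] (hμ : IsProductMeasure μ ν)
    (c : LatticeEdge d → ℝ) (s : Finset (LatticeEdge d)) (e₀ : LatticeEdge d)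
    (he₀ : e₀ ∈ s) (hc : c e₀ ≠ 0) :
    μ {x | ∑ e ∈ s, c e * x e = 0} = 0 := by
  classical
  have hf : Measurable (fun (x : LatticeEdge d → ℝ) (i : s) => x i) :=
    measurable_pi_lambda _ fun i => measurable_pi_apply _
  have hA : MeasurableSet {y : s → ℝ | ∑ i : s, c i * y i = 0} := by
    have hmeas : Measurable fun y : s → ℝ => ∑ i : s, c i * y i :=
      Finset.measurable_sum _ fun i _ => (measurable_pi_apply i).const_mul _
    exact hmeas (measurableSet_singleton 0)
  have hset : {x : LatticeEdge d → ℝ | ∑ e ∈ s, c e * x e = 0}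
      = (fun (x : LatticeEdge d → ℝ) (i : s) => x i) ⁻¹' {y : s → ℝ | ∑ i : s, c i * y i = 0} := by
    ext x
    simp only [mem_setOf_eq, mem_preimage]
    rw [← Finset.sum_coe_sort s (fun e => c e * x e)]
  rw [hset, ← Measure.map_apply hf hA, hμ s]
  exact pi_linear_null ν (fun i : s => c i) ⟨e₀, he₀⟩ hc

lemma marginal_null {d : ℕ} (ν : Measure ℝ) [IsProbabilityMeasure ν]
    (μ : Measure (LatticeEdge d → ℝ)) [IsProbabilityMeasure μ] (hμ : IsProductMeasure μ ν)
    (e : LatticeEdge d) (S : Set ℝ) (hS : MeasurableSet S) (hν : ν S = 0) :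
    μ {x | x e ∈ S} = 0 := by
  classical
  have hf : Measurable (fun (x : LatticeEdge d → ℝ) (i : ({e} : Finset (LatticeEdge d))) => x i) :=
    measurable_pi_lambda _ fun i => measurable_pi_apply _
  have hee : e ∈ ({e} : Finset (LatticeEdge d)) := Finset.mem_singleton_self e
  have hset : {x : LatticeEdge d → ℝ | x e ∈ S}
      = (fun (x : LatticeEdge d → ℝ) (i : ({e} : Finset (LatticeEdge d))) => x i) ⁻¹'
        (Function.eval (⟨e, hee⟩ : ({e} : Finset (LatticeEdge d))) ⁻¹' S) := rfl
  rw [hset, ← Measure.map_apply hf ((measurable_pi_apply _) hS), hμ {e}]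
  exact Measure.pi_eval_preimage_null _ hν

end FppAux

/-- **Almost sure uniqueness of geodesics** (used in the proof of Lemma 4.6 of
Benaïm–Rossignol).  Let `d ≥ 2`, `ν` a probability measure on `ℝ⁺` absolutely continuous
with respect to Lebesgue measure, and `μ = ν^⊗E`.  Then for every vertex `v ≠ 0`,
`μ`-almost surely there is exactly one geodesic from `0` to `v`, i.e. exactly one path
achieving `d_x(0,v)` (given that, as holds in this setting, at least one geodesic exists
almost surely). -/
theorem fpp_geodesic_unique
    (d : ℕ) (hd : 2 ≤ d)
    (ν : Measure ℝ) [IsProbabilityMeasure ν]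
    (hac : ν ≪ volume) (hsupp : ν (Set.Iio 0) = 0)
    (μ : Measure (LatticeEdge d → ℝ)) [IsProbabilityMeasure μ]
    (hμ : IsProductMeasure μ ν)
    (v : Fin d → ℤ) (hv : v ≠ 0)
    (hex : ∀ᵐ x ∂μ, ∃ p, IsLatticePath p 0 v ∧ pathTime x p = fppDist x 0 v) :
    ∀ᵐ x ∂μ, ∃! p : List (Fin d → ℤ),
      IsLatticePath p 0 v ∧ pathTime x p = fppDist x 0 v := by
  classical
  haveI : NeZero d := ⟨by omega⟩
  haveI : NullSingletonClass ν := ⟨fun a => hac (by simp)⟩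
  -- almost surely all edge weights are positive
  have hpos : ∀ᵐ x ∂μ, ∀ e : LatticeEdge d, 0 < x e := by
    rw [ae_all_iff]
    intro e
    have h0 : ν (Set.Iic 0) = 0 := by
      have hsub : Set.Iic (0:ℝ) = Set.Iio 0 ∪ {0} := by
        ext t; simp [le_iff_lt_or_eq]
      have h1 : ν ({(0:ℝ)}) = 0 := hac (by simp)
      rw [hsub]
      exact measure_union_null hsupp h1
    have := FppAux.marginal_null ν μ hμ e (Set.Iic 0) measurableSet_Iic h0
    rw [ae_iff]
    convert this using 2
    ext x
    simp [not_lt]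
  -- almost surely, distinct edge multisets have distinct total weights
  have hH : ∀ᵐ x ∂μ, ∀ m m' : Multiset (LatticeEdge d), m ≠ m' →
      (m.map x).sum ≠ (m'.map x).sum := by
    rw [ae_all_iff]
    intro m
    rw [ae_all_iff]
    intro m'
    by_cases hmm : m = m'
    · exact Filter.Eventually.of_forall fun x h => absurd hmm h
    · set s : Finset (LatticeEdge d) := (m + m').toFinset with hs
      obtain ⟨e₀, he₀⟩ : ∃ e, m.count e ≠ m'.count e := by
        by_contra h
        push_neg at h
        exact hmm (Multiset.ext.mpr h)
      have he₀s : e₀ ∈ s := by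
        by_contra hns
        rw [hs, Multiset.mem_toFinset, Multiset.mem_add] at hns
        push_neg at hns
        exact he₀ (by
          rw [Multiset.count_eq_zero_of_notMem hns.1, Multiset.count_eq_zero_of_notMem hns.2])
      have hsum : ∀ (k : Multiset (LatticeEdge d)), k.toFinset ⊆ s →
          ∀ x : LatticeEdge d → ℝ,
          (Multiset.map x k).sum = ∑ e ∈ s, (k.count e : ℝ) * x e := by
        intro k hk x
        rw [Finset.sum_multiset_map_count, Finset.sum_subset hk ?van]
        · exact Finset.sum_congr rfl fun e _ => by rw [nsmul_eq_mul]
        case van =>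
          intro e _ hek
          rw [Multiset.count_eq_zero_of_notMem (fun hmem => hek (Multiset.mem_toFinset.mpr hmem)),
            zero_nsmul]
      suffices hsuf : ∀ᵐ x ∂μ, (Multiset.map x m).sum ≠ (Multiset.map x m').sum by
        filter_upwards [hsuf] with x hx _
        exact hx
      rw [ae_iff]
      have hset : {x : LatticeEdge d → ℝ | ¬ (Multiset.map x m).sum ≠ (Multiset.map x m').sum}
          = {x : LatticeEdge d → ℝ |
              ∑ e ∈ s, ((m.count e : ℝ) - (m'.count e : ℝ)) * x e = 0} := by
        ext x
        simp only [mem_setOf_eq, not_not]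
        rw [hsum m (fun e he => Multiset.mem_toFinset.mpr
              (Multiset.mem_add.mpr (Or.inl (Multiset.mem_toFinset.mp he)))) x,
          hsum m' (fun e he => Multiset.mem_toFinset.mpr
              (Multiset.mem_add.mpr (Or.inr (Multiset.mem_toFinset.mp he)))) x]
        rw [show ∑ e ∈ s, ((m.count e : ℝ) - (m'.count e : ℝ)) * x e
            = ∑ e ∈ s, (m.count e : ℝ) * x e - ∑ e ∈ s, (m'.count e : ℝ) * x e by
          rw [← Finset.sum_sub_distrib]
          exact Finset.sum_congr rfl fun e _ => by ring]
        rw [sub_eq_zero]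
      rw [hset]
      exact FppAux.product_linear_null ν μ hμ _ s e₀ he₀s
        (sub_ne_zero.mpr fun h => he₀ (Nat.cast_injective h))
  filter_upwards [hex, hpos, hH] with x hex hpos hH
  obtain ⟨p₀, hp₀⟩ := hex
  refine ⟨p₀, hp₀, fun q hq => ?_⟩
  have hnq : q.Nodup := FppAux.geodesic_nodup x hpos hq.1 hq.2
  have hnp : p₀.Nodup := FppAux.geodesic_nodup x hpos hp₀.1 hp₀.2
  have hmeq : (FppAux.edgeList q : Multiset (LatticeEdge d))
      = (FppAux.edgeList p₀ : Multiset (LatticeEdge d)) := by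
    by_contra hne
    apply hH _ _ hne
    have e1 : (Multiset.map x (FppAux.edgeList q : Multiset (LatticeEdge d))).sum
        = pathTime x q := by
      rw [Multiset.map_coe, Multiset.sum_coe, FppAux.pathTime_eq_sum x hq.1.2.2]
    have e2 : (Multiset.map x (FppAux.edgeList p₀ : Multiset (LatticeEdge d))).sum
        = pathTime x p₀ := by
      rw [Multiset.map_coe, Multiset.sum_coe, FppAux.pathTime_eq_sum x hp₀.1.2.2]
    rw [e1, e2, hq.2, hp₀.2]
  exact FppAux.eq_of_edgeMultiset q.length q p₀ 0 le_rfl hq.1.2.2 hp₀.1.2.2 hnq hnp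
    hq.1.1 hp₀.1.1 hmeq

end
end
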